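/- Let 2 ≤ p ≤ q be real numbers, and let u, v be functions in L^p(μ) on a measure space (X, μ) with u ≥ v ≥ 0 almost everywhere. Then ‖u+v‖_p^q + ‖u−v‖_p^q ≥ 2(‖u‖_p^q + 2^(q-2)‖v‖_p^q). -/

import Mathlib

open MeasureTheory ENNReal

private lemma rpow_superadd {r : ℝ} (hr : 1 ≤ r) {a b : ℝ} (ha : 0 ≤ a) (hb : 0 ≤ b) :
    a ^ r + b ^ r ≤ (a + b) ^ r := by
  have h := NNReal.add_rpow_le_rpow_add a.toNNReal b.toNNReal hr
  have h2 := (NNReal.coe_le_coe.mpr h)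
  push_cast at h2
  rwa [Real.coe_toNNReal a ha, Real.coe_toNNReal b hb] at h2

private lemma pointwise_ineq {p : ℝ} (hp : 2 ≤ p) {x y : ℝ} (hy : 0 ≤ y) (hyx : y ≤ x) :
    2 * x ^ p + 2 ^ (p - 1) * y ^ p ≤ (x + y) ^ p + (x - y) ^ p := by
  have hx : 0 ≤ x := hy.trans hyx
  have hp0 : (0:ℝ) < p := by linarith
  set F : ℝ → ℝ := fun t => (x + t) ^ p + (x - t) ^ p - 2 ^ (p - 1) * t ^ p with hF
  have hmono : MonotoneOn F (Set.Icc 0 x) := by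
    apply monotoneOn_of_deriv_nonneg (convex_Icc 0 x)
    · apply ContinuousOn.sub
      · apply ContinuousOn.add
        · exact ((continuous_const.add continuous_id).continuousOn).rpow_const
            (fun t _ => Or.inr hp0.le)
        · exact ((continuous_const.sub continuous_id).continuousOn).rpow_const
            (fun t _ => Or.inr hp0.le)
      · exact (continuous_const.mul (continuous_id.rpow_const
          (fun t => Or.inr hp0.le))).continuousOn
    · intro t ht
      rw [interior_Icc] at ht
      obtain ⟨ht0, htx⟩ := ht
      have h1 : HasDerivAt (fun t : ℝ => (x + t) ^ p) (p * (x + t) ^ (p - 1)) t := by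
        simpa using (HasDerivAt.rpow_const ((hasDerivAt_id t).const_add x)
          (Or.inl (by positivity)))
      have h2 : HasDerivAt (fun t : ℝ => (x - t) ^ p) (-(p * (x - t) ^ (p - 1))) t := by
        have hne : x - t ≠ 0 := by
          have : 0 < x - t := by linarith
          positivity
        simpa using (HasDerivAt.rpow_const ((hasDerivAt_id t).const_sub x) (Or.inl hne))
      have h3 : HasDerivAt (fun t : ℝ => 2 ^ (p - 1) * t ^ p)
          (2 ^ (p - 1) * (p * t ^ (p - 1))) t := by
        simpa using (HasDerivAt.rpow_const (hasDerivAt_id t) (Or.inl ht0.ne')).const_mul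
          ((2:ℝ) ^ (p - 1))
      exact (((h1.add h2).sub h3)).differentiableAt.differentiableWithinAt
    · intro t ht
      rw [interior_Icc] at ht
      obtain ⟨ht0, htx⟩ := ht
      have h1 : HasDerivAt (fun t : ℝ => (x + t) ^ p) (p * (x + t) ^ (p - 1)) t := by
        simpa using (HasDerivAt.rpow_const ((hasDerivAt_id t).const_add x)
          (Or.inl (by positivity)))
      have h2 : HasDerivAt (fun t : ℝ => (x - t) ^ p) (-(p * (x - t) ^ (p - 1))) t := by
        have hne : x - t ≠ 0 := by
          have : 0 < x - t := by linarith
          positivity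
        simpa using (HasDerivAt.rpow_const ((hasDerivAt_id t).const_sub x) (Or.inl hne))
      have h3 : HasDerivAt (fun t : ℝ => 2 ^ (p - 1) * t ^ p)
          (2 ^ (p - 1) * (p * t ^ (p - 1))) t := by
        simpa using (HasDerivAt.rpow_const (hasDerivAt_id t) (Or.inl ht0.ne')).const_mul
          ((2:ℝ) ^ (p - 1))
      have hd : deriv (fun t => (x + t) ^ p + (x - t) ^ p - 2 ^ (p - 1) * t ^ p) t = _ :=
        ((h1.add h2).sub h3).deriv
      rw [hF, hd]
      have hsup : (x - t) ^ (p - 1) + (2 * t) ^ (p - 1) ≤ (x + t) ^ (p - 1) := by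
        have := rpow_superadd (r := p - 1) (by linarith) (a := x - t) (b := 2 * t)
          (by linarith) (by linarith)
        have he : x - t + 2 * t = x + t := by ring
        rwa [he] at this
      have h2t : (2 * t) ^ (p - 1) = 2 ^ (p - 1) * t ^ (p - 1) :=
        Real.mul_rpow (by norm_num) ht0.le
      rw [h2t] at hsup
      nlinarith [hp0]
  have key := hmono (Set.mem_Icc.mpr ⟨le_refl 0, hx⟩) (Set.mem_Icc.mpr ⟨hy, hyx⟩) hy
  rw [hF] at key
  simp only [add_zero, sub_zero] at key
  rw [Real.zero_rpow hp0.ne'] at key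
  linarith


private lemma karamata2 {s : ℝ} (hs : 1 ≤ s) {a b δ : ℝ} (hb : 0 ≤ b) (hba : b ≤ a)
    (hδ : 0 ≤ δ) : a ^ s + (b + δ) ^ s ≤ (a + δ) ^ s + b ^ s := by
  have ha : 0 ≤ a := hb.trans hba
  rcases eq_or_lt_of_le (by linarith : (0:ℝ) ≤ a - b + δ) with hT | hT
  · have h1 : a = b := by linarith [hδ, hba]
    have h2 : δ = 0 := by linarith
    simp [h1, h2]
  · set T := a - b + δ with hTdef
    set l := δ / T with hl
    have hl0 : 0 ≤ l := div_nonneg hδ hT.le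
    have hl1 : l ≤ 1 := by rw [hl, div_le_one hT]; linarith
    have cvx := convexOn_rpow hs
    have mem1 : (a + δ) ∈ Set.Ici (0:ℝ) := by simp; linarith
    have mem2 : b ∈ Set.Ici (0:ℝ) := hb
    have c1 := cvx.2 mem1 mem2 (by linarith : (0:ℝ) ≤ 1 - l) hl0 (by ring)
    have c2 := cvx.2 mem1 mem2 hl0 (by linarith : (0:ℝ) ≤ 1 - l) (by ring)
    simp only [smul_eq_mul] at c1 c2
    have hlT : l * T = δ := by rw [hl]; exact div_mul_cancel₀ δ hT.ne'
    have e1 : (1 - l) * (a + δ) + l * b = a := by linear_combination -hlT + l * hTdef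
    have e2 : l * (a + δ) + (1 - l) * b = b + δ := by linear_combination hlT - l * hTdef
    rw [e1] at c1
    rw [e2] at c2
    linarith

private lemma midpoint_rpow {s : ℝ} (hs : 1 ≤ s) {a b : ℝ} (ha : 0 ≤ a) (hb : 0 ≤ b) :
    2 * ((a + b) / 2) ^ s ≤ a ^ s + b ^ s := by
  have cvx := convexOn_rpow hs
  have h := cvx.2 (Set.mem_Ici.mpr ha) (Set.mem_Ici.mpr hb)
    (by norm_num : (0:ℝ) ≤ 1/2) (by norm_num : (0:ℝ) ≤ 1/2) (by norm_num)
  simp only [smul_eq_mul] at h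
  have he : (1/2 : ℝ) * a + 1/2 * b = (a + b) / 2 := by ring
  rw [he] at h
  linarith

private lemma rpow_self_mul {s : ℝ} (hs : 1 ≤ s) {t : ℝ} (ht : 0 ≤ t) :
    t ^ s = t ^ (s - 1) * t := by
  rcases eq_or_lt_of_le ht with h0 | h0
  · rw [← h0, Real.zero_rpow (by linarith : s ≠ 0), mul_zero]
  · have h := Real.rpow_add h0 (s - 1) 1
    rw [Real.rpow_one, sub_add_cancel] at h
    exact h

private lemma slope_bound {s : ℝ} (hs : 1 ≤ s) {c X : ℝ} (hc : 0 ≤ c) (hcX : c ≤ X) :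
    c ^ s ≤ c * X ^ (s - 1) := by
  rw [rpow_self_mul hs hc, mul_comm]
  exact mul_le_mul_of_nonneg_left
    (Real.rpow_le_rpow hc hcX (by linarith)) hc

private lemma transfer {s : ℝ} (hs : 1 ≤ s) {x y c e : ℝ} (hy : 0 ≤ y) (hyx : y ≤ x)
    (hc : 0 ≤ c) (hcx : c ≤ x) (he : 0 ≤ e) (hex : e ≤ x)
    (hsum : 2 * c + e / 2 ≤ x + y) :
    2 * c ^ s + e ^ s / 2 ≤ x ^ s + y ^ s := by
  have hx : 0 ≤ x := hy.trans hyx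
  have hys : 0 ≤ y ^ s := Real.rpow_nonneg hy s
  rcases le_or_gt (2 * c + e / 2) x with hcase | hcase
  · -- Case A : 2c + e/2 ≤ x
    have h1 : c ^ s ≤ c * x ^ (s - 1) := slope_bound hs hc hcx
    have h2 : e ^ s ≤ e * x ^ (s - 1) := slope_bound hs he hex
    have h3 : x ^ s = x ^ (s - 1) * x := rpow_self_mul hs hx
    have hxp : 0 ≤ x ^ (s - 1) := Real.rpow_nonneg hx _
    nlinarith [mul_le_mul_of_nonneg_right hcase hxp]
  · -- Case B : x < m
    have hm_pos : 0 < 2 * c + e / 2 := lt_of_le_of_lt hx hcase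
    have hym : 2 * c + e / 2 - x ≤ y := by linarith
    rcases le_or_gt (3 * e / 4) c with hB1 | hB2
    · -- B1 : c ≥ 3e/4
      have hpos : 0 < c + e / 4 := by linarith
      have hsplit : (c + e / 4) ^ s = (c + e / 4) ^ (s - 1) * (c + e / 4) :=
        rpow_self_mul hs hpos.le
      have hg1 : c ^ (s - 1) ≤ (c + e / 4) ^ (s - 1) :=
        Real.rpow_le_rpow hc (by linarith) (by linarith)
      have hg2 : e ^ (s - 1) ≤ (c + e / 4) ^ (s - 1) :=
        Real.rpow_le_rpow he (by linarith) (by linarith)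
      have hcs : c ^ s = c ^ (s - 1) * c := rpow_self_mul hs hc
      have hes : e ^ s = e ^ (s - 1) * e := rpow_self_mul hs he
      have step3 : c ^ s + e ^ s / 4 ≤ (c + e / 4) ^ s := by
        rw [hsplit, hcs, hes]
        nlinarith [hg1, hg2, hc, he]
      have step2 : ((c + e / 4)) ^ s ≤ ((x + y) / 2) ^ s := by
        apply Real.rpow_le_rpow hpos.le (by linarith) (by linarith)
      have step1 : 2 * ((x + y) / 2) ^ s ≤ x ^ s + y ^ s := midpoint_rpow hs hx hy
      linarith
    · -- B2 : c < 3e/4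
      have he_pos : 0 < e := by linarith
      have h2c : e / 2 < 2 * c := by linarith [hex]
      have hmx0 : 0 ≤ 2 * c + e / 2 - x := by linarith
      have stepi : (2 * c + e / 2 - x) ^ s ≤ y ^ s :=
        Real.rpow_le_rpow hmx0 hym (by linarith)
      have stepii : e ^ s + (2 * c - e / 2) ^ s ≤ x ^ s + (2 * c + e / 2 - x) ^ s := by
        have hk := karamata2 hs (a := e) (b := 2 * c + e / 2 - x) (δ := x - e)
          hmx0 (by linarith) (by linarith)
        have e1 : e + (x - e) = x := by ring
        have e2 : 2 * c + e / 2 - x + (x - e) = 2 * c - e / 2 := by ring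
        rw [e1, e2] at hk
        linarith
      have stepiii : 2 * c ^ s ≤ (e / 2) ^ s + (2 * c - e / 2) ^ s := by
        have hm := midpoint_rpow hs (a := e / 2) (b := 2 * c - e / 2)
          (by linarith) (by linarith)
        have e3 : (e / 2 + (2 * c - e / 2)) / 2 = c := by ring
        rw [e3] at hm
        linarith
      have stepiv : (e / 2) ^ s ≤ e ^ s / 2 := by
        have h2s : (2:ℝ) ≤ 2 ^ s := by
          have h := Real.rpow_le_rpow_of_exponent_le (by norm_num : (1:ℝ) ≤ 2) hs
          rwa [Real.rpow_one] at h
        rw [Real.div_rpow he (by norm_num : (0:ℝ) ≤ 2)]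
        gcongr
      linarith


theorem stmt6 {X : Type*} [MeasurableSpace X] (μ : Measure X) (p q : ℝ)
    (hp : 2 ≤ p) (hpq : p ≤ q) (u v : X → ℝ)
    (hu : MemLp u (ENNReal.ofReal p) μ) (hv : MemLp v (ENNReal.ofReal p) μ)
    (h : ∀ᵐ x ∂μ, 0 ≤ v x ∧ v x ≤ u x) :
    eLpNorm (u + v) (ENNReal.ofReal p) μ ^ q + eLpNorm (u - v) (ENNReal.ofReal p) μ ^ q ≥
      2 * (eLpNorm u (ENNReal.ofReal p) μ ^ q +
        (2 : ℝ≥0∞) ^ (q - 2) * eLpNorm v (ENNReal.ofReal p) μ ^ q) := by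
  have hp0 : (0:ℝ) < p := by linarith
  have hq0 : (0:ℝ) < q := by linarith
  have hq1 : 1 ≤ q / p := (one_le_div hp0).mpr hpq
  have hr0 : (ENNReal.ofReal p) ≠ 0 := by
    simp only [ne_eq, ENNReal.ofReal_eq_zero, not_le]
    linarith
  have hrT : (ENNReal.ofReal p) ≠ ∞ := ENNReal.ofReal_ne_top
  have hrtoReal : (ENNReal.ofReal p).toReal = p := ENNReal.toReal_ofReal hp0.le
  have hJ : ∀ f : X → ℝ, eLpNorm f (ENNReal.ofReal p) μ ^ p
      = ∫⁻ x, (‖f x‖₊ : ℝ≥0∞) ^ p ∂μ := by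
    intro f
    rw [eLpNorm_eq_lintegral_rpow_enorm_toReal hr0 hrT, hrtoReal, ← ENNReal.rpow_mul,
      one_div, inv_mul_cancel₀ hp0.ne', ENNReal.rpow_one]
    simp only [enorm_eq_nnnorm]
  set A := eLpNorm (u + v) (ENNReal.ofReal p) μ with hA
  set B := eLpNorm (u - v) (ENNReal.ofReal p) μ with hB
  set C := eLpNorm u (ENNReal.ofReal p) μ with hC
  set D := eLpNorm v (ENNReal.ofReal p) μ with hD
  have hAfin : A ≠ ∞ := (hu.add hv).2.ne
  have hBfin : B ≠ ∞ := (hu.sub hv).2.ne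
  have hCfin : C ≠ ∞ := hu.2.ne
  have hDfin : D ≠ ∞ := hv.2.ne
  have hBA : B ≤ A := by
    apply eLpNorm_mono_ae
    filter_upwards [h] with x hx
    obtain ⟨hv0, hvu⟩ := hx
    simp only [Pi.add_apply, Pi.sub_apply, Real.norm_eq_abs]
    rw [abs_of_nonneg (by linarith), abs_of_nonneg (by linarith)]
    linarith
  have hCA : C ≤ A := by
    apply eLpNorm_mono_ae
    filter_upwards [h] with x hx
    obtain ⟨hv0, hvu⟩ := hx
    simp only [Pi.add_apply, Real.norm_eq_abs]
    rw [abs_of_nonneg (by linarith), abs_of_nonneg (by linarith)]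
    linarith
  have hDA : 2 * D ≤ A := by
    have h1 : eLpNorm ((2:ℝ) • v) (ENNReal.ofReal p) μ ≤ A := by
      apply eLpNorm_mono_ae
      filter_upwards [h] with x hx
      obtain ⟨hv0, hvu⟩ := hx
      simp only [Pi.smul_apply, Pi.add_apply, smul_eq_mul, Real.norm_eq_abs]
      rw [abs_of_nonneg (by linarith), abs_of_nonneg (by linarith)]
      linarith
    rw [eLpNorm_const_smul] at h1
    have h2 : (‖(2:ℝ)‖ₑ) = 2 := by
      rw [Real.enorm_eq_ofReal (by norm_num)]; norm_num
    rwa [h2, ← hD] at h1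
  have hmeas : ∀ f : X → ℝ, AEStronglyMeasurable f μ →
      AEMeasurable (fun x => (‖f x‖₊ : ℝ≥0∞) ^ p) μ := fun f hf =>
    (hf.aemeasurable.nnnorm.coe_nnreal_ennreal).pow_const p
  have key : 2 * C ^ p + ENNReal.ofReal (2 ^ (p - 1)) * D ^ p ≤ A ^ p + B ^ p := by
    rw [hA, hB, hC, hD, hJ, hJ, hJ, hJ]
    have hptw : ∀ᵐ x ∂μ,
        2 * (‖u x‖₊ : ℝ≥0∞) ^ p + ENNReal.ofReal (2 ^ (p - 1)) * (‖v x‖₊ : ℝ≥0∞) ^ p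
          ≤ (‖(u + v) x‖₊ : ℝ≥0∞) ^ p + (‖(u - v) x‖₊ : ℝ≥0∞) ^ p := by
      filter_upwards [h] with x hx
      obtain ⟨hv0, hvu⟩ := hx
      have hu0 : 0 ≤ u x := le_trans hv0 hvu
      simp only [Pi.add_apply, Pi.sub_apply]
      simp only [← enorm_eq_nnnorm]
      rw [Real.enorm_eq_ofReal hu0, Real.enorm_eq_ofReal hv0,
        Real.enorm_eq_ofReal (by linarith : (0:ℝ) ≤ u x + v x),
        Real.enorm_eq_ofReal (by linarith : (0:ℝ) ≤ u x - v x),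
        ENNReal.ofReal_rpow_of_nonneg hu0 hp0.le,
        ENNReal.ofReal_rpow_of_nonneg hv0 hp0.le,
        ENNReal.ofReal_rpow_of_nonneg (by linarith : (0:ℝ) ≤ u x + v x) hp0.le,
        ENNReal.ofReal_rpow_of_nonneg (by linarith : (0:ℝ) ≤ u x - v x) hp0.le]
      have h2e : (2:ℝ≥0∞) = ENNReal.ofReal 2 := by norm_num
      rw [h2e, ← ENNReal.ofReal_mul (by norm_num : (0:ℝ) ≤ 2),
        ← ENNReal.ofReal_mul (by positivity : (0:ℝ) ≤ (2:ℝ) ^ (p-1)),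
        ← ENNReal.ofReal_add (mul_nonneg (by norm_num) (Real.rpow_nonneg hu0 p))
          (mul_nonneg (by positivity) (Real.rpow_nonneg hv0 p)),
        ← ENNReal.ofReal_add (Real.rpow_nonneg (by linarith) p)
          (Real.rpow_nonneg (by linarith) p)]
      exact ENNReal.ofReal_le_ofReal (pointwise_ineq hp hv0 hvu)
    have m1 := hmeas u hu.1
    have m2 := hmeas v hv.1
    have m3 := hmeas (u + v) (hu.add hv).1
    rw [← lintegral_const_mul'' (2:ℝ≥0∞) m1,
      ← lintegral_const_mul'' (ENNReal.ofReal (2 ^ (p - 1))) m2,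
      ← lintegral_add_left' (m1.const_mul _),
      ← lintegral_add_left' m3]
    exact lintegral_mono_ae hptw
  -- pass to real numbers
  set a := A.toReal with haa
  set b := B.toReal with hbb
  set c := C.toReal with hcc
  set d := D.toReal with hdd
  have ha0 : 0 ≤ a := ENNReal.toReal_nonneg
  have hb0 : 0 ≤ b := ENNReal.toReal_nonneg
  have hc0 : 0 ≤ c := ENNReal.toReal_nonneg
  have hd0 : 0 ≤ d := ENNReal.toReal_nonneg
  have hba : b ≤ a := ENNReal.toReal_mono hAfin hBA
  have hca : c ≤ a := ENNReal.toReal_mono hAfin hCA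
  have hda : 2 * d ≤ a := by
    have h1 := ENNReal.toReal_mono hAfin hDA
    rwa [ENNReal.toReal_mul, ENNReal.toReal_ofNat] at h1
  have keyR : 2 * c ^ p + 2 ^ (p - 1) * d ^ p ≤ a ^ p + b ^ p := by
    have hfinR : A ^ p + B ^ p ≠ ∞ := by
      rw [ne_eq, ENNReal.add_eq_top]
      push_neg
      exact ⟨ENNReal.rpow_ne_top_of_nonneg hp0.le hAfin,
        ENNReal.rpow_ne_top_of_nonneg hp0.le hBfin⟩
    have hfinL : 2 * C ^ p + ENNReal.ofReal (2 ^ (p - 1)) * D ^ p ≠ ∞ := by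
      rw [ne_eq, ENNReal.add_eq_top]
      push_neg
      constructor
      · exact ENNReal.mul_ne_top (by norm_num)
          (ENNReal.rpow_ne_top_of_nonneg hp0.le hCfin)
      · exact ENNReal.mul_ne_top ENNReal.ofReal_ne_top
          (ENNReal.rpow_ne_top_of_nonneg hp0.le hDfin)
    have h1 := (ENNReal.toReal_le_toReal hfinL hfinR).mpr key
    rw [ENNReal.toReal_add (ENNReal.mul_ne_top (by norm_num)
          (ENNReal.rpow_ne_top_of_nonneg hp0.le hCfin))
        (ENNReal.mul_ne_top ENNReal.ofReal_ne_top
          (ENNReal.rpow_ne_top_of_nonneg hp0.le hDfin)),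
      ENNReal.toReal_add (ENNReal.rpow_ne_top_of_nonneg hp0.le hAfin)
        (ENNReal.rpow_ne_top_of_nonneg hp0.le hBfin),
      ENNReal.toReal_mul, ENNReal.toReal_mul, ENNReal.toReal_ofNat,
      ENNReal.toReal_ofReal (by positivity : (0:ℝ) ≤ (2:ℝ) ^ (p - 1)),
      ← ENNReal.toReal_rpow, ← ENNReal.toReal_rpow, ← ENNReal.toReal_rpow,
      ← ENNReal.toReal_rpow] at h1
    exact h1
  -- apply the transfer lemma
  have hcomp : ∀ t : ℝ, 0 ≤ t → (t ^ p) ^ (q / p) = t ^ q := by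
    intro t ht
    rw [← Real.rpow_mul ht]
    congr 1
    field_simp
  have h2dp : (2 * d) ^ p / 2 = 2 ^ (p - 1) * d ^ p := by
    rw [Real.mul_rpow (by norm_num : (0:ℝ) ≤ 2) hd0,
      rpow_self_mul (by linarith : (1:ℝ) ≤ p) (by norm_num : (0:ℝ) ≤ 2)]
    ring
  have ht := transfer hq1 (x := a ^ p) (y := b ^ p) (c := c ^ p) (e := (2 * d) ^ p)
    (Real.rpow_nonneg hb0 p) (Real.rpow_le_rpow hb0 hba hp0.le)
    (Real.rpow_nonneg hc0 p) (Real.rpow_le_rpow hc0 hca hp0.le)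
    (Real.rpow_nonneg (by positivity) p) (Real.rpow_le_rpow (by positivity) hda hp0.le)
    (by rw [h2dp]; linarith)
  rw [hcomp a ha0, hcomp b hb0, hcomp c hc0, hcomp (2 * d) (by positivity)] at ht
  have h2dq : (2 * d) ^ q / 2 = 2 * (2 ^ (q - 2) * d ^ q) := by
    rw [Real.mul_rpow (by norm_num : (0:ℝ) ≤ 2) hd0]
    have e1 : (2:ℝ) ^ q = 2 ^ (q - 2) * 2 ^ (2:ℝ) := by
      rw [← Real.rpow_add (by norm_num : (0:ℝ) < 2)]
      ring_nf
    rw [e1]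
    have e2 : (2:ℝ) ^ (2:ℝ) = 4 := by
      rw [show (2:ℝ) = ((2:ℕ):ℝ) by norm_num, Real.rpow_natCast]
      norm_num
    rw [e2]
    ring
  rw [h2dq] at ht
  have keyR2 : 2 * (c ^ q + 2 ^ (q - 2) * d ^ q) ≤ a ^ q + b ^ q := by linarith
  -- back to ℝ≥0∞
  rw [ge_iff_le, ← ENNReal.ofReal_toReal hAfin, ← ENNReal.ofReal_toReal hBfin,
    ← ENNReal.ofReal_toReal hCfin, ← ENNReal.ofReal_toReal hDfin,
    ENNReal.ofReal_rpow_of_nonneg ha0 hq0.le, ENNReal.ofReal_rpow_of_nonneg hb0 hq0.le,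
    ENNReal.ofReal_rpow_of_nonneg hc0 hq0.le, ENNReal.ofReal_rpow_of_nonneg hd0 hq0.le]
  have h2e : (2:ℝ≥0∞) = ENNReal.ofReal 2 := by norm_num
  rw [h2e, ENNReal.ofReal_rpow_of_pos (by norm_num : (0:ℝ) < 2),
    ← ENNReal.ofReal_mul (by positivity : (0:ℝ) ≤ (2:ℝ) ^ (q - 2)),
    ← ENNReal.ofReal_add (Real.rpow_nonneg hc0 q)
      (mul_nonneg (by positivity) (Real.rpow_nonneg hd0 q)),
    ← ENNReal.ofReal_mul (by norm_num : (0:ℝ) ≤ 2),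
    ← ENNReal.ofReal_add (Real.rpow_nonneg ha0 q) (Real.rpow_nonneg hb0 q)]
  exact ENNReal.ofReal_le_ofReal keyR2
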